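/- Suppose X is at most countable and [x] = c·x + O(x^α) for some constant c > 0 and some α ∈ [0, 1). Then for every fixed K ∈ I_X with K ≠ 0, one has Σ_{M ∈ I_X, N(M) ≤ x} C_K(M) = O(x^α) as x → ∞. -/

import Mathlib

open Finset Filter Topology Asymptotics
open scoped Classical

/-- The Möbius function on `I_X = X →₀ ℕ`: `μ A = (-1)^(∑ₓ A x)` if `A x ≤ 1`
for every `x`, and `0` otherwise. -/
noncomputable def mob {X : Type*} (A : X →₀ ℕ) : ℤ :=
  if ∀ x, A x ≤ 1 then (-1) ^ (A.sum fun _ n => n) else 0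

/-- The generalized Ramanujan sum `C_K(M) = ∑_{D ≤ M, D ≤ K} N(D)·μ(K − D)`. -/
noncomputable def ram {X : Type*} [DecidableEq X] (Nrm : (X →₀ ℕ) → ℤ)
    (K M : X →₀ ℕ) : ℤ :=
  ∑ D ∈ Finset.Iic (M ⊓ K), Nrm D * mob (K - D)
lemma mob_add_single {X : Type*} [DecidableEq X] {D : X →₀ ℕ} {x₀ : X} (h : D x₀ = 0) :
    mob (D + Finsupp.single x₀ 1) = - mob D := by
  have hsum : ((D + Finsupp.single x₀ 1).sum fun _ n => n) = (D.sum fun _ n => n) + 1 := by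
    rw [Finsupp.sum_add_index' (by simp) (by simp)]
    simp
  have hcond : (∀ x, (D + Finsupp.single x₀ 1 : X →₀ ℕ) x ≤ 1) ↔ (∀ x, D x ≤ 1) := by
    constructor
    · intro hx x
      by_cases hx0 : x = x₀
      · simp [hx0, h]
      · have := hx x
        simpa [Finsupp.single_apply, Ne.symm hx0, hx0] using this
    · intro hx x
      by_cases hx0 : x = x₀
      · simp [hx0, h]
      · simpa [Finsupp.single_apply, Ne.symm hx0, hx0] using hx x
  unfold mob
  by_cases hx : ∀ x, D x ≤ 1
  · rw [if_pos (hcond.mpr hx), if_pos hx, hsum, pow_succ]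
    ring
  · rw [if_neg (fun hc => hx (hcond.mp hc)), if_neg hx]
    ring

lemma mob_sum_zero {X : Type*} [DecidableEq X] (K : X →₀ ℕ) (hK : K ≠ 0) :
    ∑ D ∈ Finset.Iic K, mob D = 0 := by
  obtain ⟨x₀, hx₀⟩ : ∃ x, K x ≠ 0 := by simpa [Finsupp.ne_iff] using hK
  refine Finset.sum_involution
    (fun D _ => if D x₀ = 0 then D + Finsupp.single x₀ 1
      else if D x₀ = 1 then D - Finsupp.single x₀ 1 else D) ?_ ?_ ?_ ?_
  · intro D hD
    by_cases h0 : D x₀ = 0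
    · rw [if_pos h0, mob_add_single h0]; ring
    · by_cases h1 : D x₀ = 1
      · rw [if_neg h0, if_pos h1]
        have h0' : (D - Finsupp.single x₀ 1 : X →₀ ℕ) x₀ = 0 := by
          simp [Finsupp.tsub_apply, h1]
        have heq : (D - Finsupp.single x₀ 1) + Finsupp.single x₀ 1 = D := by
          refine tsub_add_cancel_of_le ?_
          simp [Finsupp.single_le_iff, h1]
        calc mob D + mob (D - Finsupp.single x₀ 1)
            = mob ((D - Finsupp.single x₀ 1) + Finsupp.single x₀ 1)
              + mob (D - Finsupp.single x₀ 1) := by rw [heq]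
          _ = 0 := by rw [mob_add_single h0']; ring
      · rw [if_neg h0, if_neg h1]
        have : mob D = 0 := by
          unfold mob
          rw [if_neg]
          intro hc
          exact absurd (hc x₀) (by omega)
        rw [this]; ring
  · intro D hD hne
    have hx : ∀ x, D x ≤ 1 := by
      by_contra hc
      apply hne
      unfold mob
      rw [if_neg hc]
    by_cases h0 : D x₀ = 0
    · rw [if_pos h0]
      intro hc
      have := congrArg (fun f : X →₀ ℕ => f x₀) hc
      simp [h0] at this
    · have h1 : D x₀ = 1 := by have := hx x₀; omega
      rw [if_neg h0, if_pos h1]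
      intro hc
      have := congrArg (fun f : X →₀ ℕ => f x₀) hc
      simp [Finsupp.tsub_apply, h1] at this
  · intro D hD
    simp only [Finset.mem_Iic] at hD ⊢
    by_cases h0 : D x₀ = 0
    · rw [if_pos h0]
      rw [Finsupp.le_def] at hD ⊢
      intro x
      by_cases hx0 : x = x₀
      · subst hx0
        have := hD x; simp [h0]; omega
      · have := hD x
        simpa [Finsupp.single_apply, Ne.symm hx0, hx0] using this
    · by_cases h1 : D x₀ = 1
      · rw [if_neg h0, if_pos h1]
        exact le_trans tsub_le_self hD
      · rw [if_neg h0, if_neg h1]; exact hD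
  · intro D hD
    by_cases h0 : D x₀ = 0
    · have hval : (D + Finsupp.single x₀ 1 : X →₀ ℕ) x₀ = 1 := by simp [h0]
      rw [if_pos h0, if_neg (by omega), if_pos hval]
      exact add_tsub_cancel_right _ _
    · by_cases h1 : D x₀ = 1
      · have hval : (D - Finsupp.single x₀ 1 : X →₀ ℕ) x₀ = 0 := by
          simp [Finsupp.tsub_apply, h1]
        rw [if_neg h0, if_pos h1, if_pos hval]
        refine tsub_add_cancel_of_le ?_
        simp [Finsupp.single_le_iff, h1]
      · rw [if_neg h0, if_neg h1, if_neg h0, if_neg h1]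
lemma card_shift {X : Type*} [DecidableEq X] (Nrm : (X →₀ ℕ) → ℤ)
    (hge : ∀ A, 1 ≤ Nrm A) (hmul : ∀ A B, Nrm (A + B) = Nrm A * Nrm B)
    (hfin : ∀ x : ℝ, {A : X →₀ ℕ | (Nrm A : ℝ) ≤ x}.Finite)
    (D : X →₀ ℕ) (x : ℝ) :
    ((hfin x).toFinset.filter (fun M => D ≤ M)).card
      = (hfin (x / (Nrm D : ℝ))).toFinset.card := by
  have hDpos : (0 : ℝ) < (Nrm D : ℝ) := by exact_mod_cast lt_of_lt_of_le zero_lt_one (hge D)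
  refine Finset.card_bij' (fun M _ => M - D) (fun M' _ => M' + D) ?_ ?_ ?_ ?_
  · intro M hM
    simp only [Finset.mem_filter, Set.Finite.mem_toFinset, Set.mem_setOf_eq] at hM ⊢
    obtain ⟨h1, h2⟩ := hM
    have hdec : D + (M - D) = M := add_tsub_cancel_of_le h2
    have hNM : Nrm M = Nrm D * Nrm (M - D) := by
      conv_lhs => rw [← hdec]
      rw [hmul]
    rw [le_div_iff₀' hDpos]
    calc (Nrm D : ℝ) * (Nrm (M - D) : ℝ) = (Nrm M : ℝ) := by rw [hNM]; push_cast; ring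
      _ ≤ x := h1
  · intro M' hM'
    simp only [Finset.mem_filter, Set.Finite.mem_toFinset, Set.mem_setOf_eq] at hM' ⊢
    constructor
    · have : (Nrm (M' + D) : ℝ) = (Nrm D : ℝ) * (Nrm M' : ℝ) := by push_cast [hmul]; ring
      rw [this]
      calc (Nrm D : ℝ) * (Nrm M' : ℝ) ≤ (Nrm D : ℝ) * (x / (Nrm D : ℝ)) := by
            exact mul_le_mul_of_nonneg_left hM' hDpos.le
        _ = x := by field_simp
    · exact le_add_self
  · intro M hM
    simp only [Finset.mem_filter] at hM
    exact tsub_add_cancel_of_le hM.2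
  · intro M' _
    exact add_tsub_cancel_right _ _

lemma sum_ram_eq {X : Type*} [DecidableEq X] (Nrm : (X →₀ ℕ) → ℤ)
    (hge : ∀ A, 1 ≤ Nrm A) (hmul : ∀ A B, Nrm (A + B) = Nrm A * Nrm B)
    (hfin : ∀ x : ℝ, {A : X →₀ ℕ | (Nrm A : ℝ) ≤ x}.Finite)
    (K : X →₀ ℕ) (x : ℝ) :
    (∑ M ∈ (hfin x).toFinset, ram Nrm K M)
      = ∑ D ∈ Finset.Iic K, Nrm D * mob (K - D)
          * ((hfin (x / (Nrm D : ℝ))).toFinset.card : ℤ) := by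
  have step1 : ∀ M, ram Nrm K M
      = ∑ D ∈ Finset.Iic K, if D ≤ M then Nrm D * mob (K - D) else 0 := by
    intro M
    rw [ram, ← Finset.sum_filter]
    congr 1
    ext D
    simp [le_inf_iff, and_comm]
  calc (∑ M ∈ (hfin x).toFinset, ram Nrm K M)
      = ∑ M ∈ (hfin x).toFinset, ∑ D ∈ Finset.Iic K,
          if D ≤ M then Nrm D * mob (K - D) else 0 := by
        exact Finset.sum_congr rfl fun M _ => step1 M
    _ = ∑ D ∈ Finset.Iic K, ∑ M ∈ (hfin x).toFinset,
          if D ≤ M then Nrm D * mob (K - D) else 0 := Finset.sum_comm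
    _ = ∑ D ∈ Finset.Iic K, Nrm D * mob (K - D)
          * (((hfin x).toFinset.filter (fun M => D ≤ M)).card : ℤ) := by
        refine Finset.sum_congr rfl fun D _ => ?_
        rw [Finset.sum_ite, Finset.sum_const, Finset.sum_const_zero, add_zero,
          nsmul_eq_mul, mul_comm]
    _ = _ := by
        refine Finset.sum_congr rfl fun D _ => ?_
        rw [card_shift Nrm hge hmul hfin D x]

lemma mob_rev_sum_zero {X : Type*} [DecidableEq X] (K : X →₀ ℕ) (hK : K ≠ 0) :
    ∑ D ∈ Finset.Iic K, mob (K - D) = 0 := by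
  rw [← mob_sum_zero K hK]
  refine Finset.sum_nbij' (fun D => K - D) (fun D => K - D) ?_ ?_ ?_ ?_ ?_
  · intro D hD; simp [Finset.mem_Iic]
  · intro D hD; simp [Finset.mem_Iic]
  · intro D hD
    exact tsub_tsub_cancel_of_le (Finset.mem_Iic.mp hD)
  · intro D hD
    exact tsub_tsub_cancel_of_le (Finset.mem_Iic.mp hD)
  · intro D hD; rfl

/-- If `#{A : N(A) ≤ x} = c·x + O(x^α)` with `c > 0` and `0 ≤ α < 1`, then for every
fixed `K ≠ 0`, `∑_{N(M) ≤ x} C_K(M) = O(x^α)` as `x → ∞`. -/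
theorem sum_ram_ne_zero_asymptotic {X : Type*} [Nonempty X] [Countable X] [DecidableEq X]
    (Nrm : (X →₀ ℕ) → ℤ)
    (hge : ∀ A, 1 ≤ Nrm A) (h0 : Nrm 0 = 1) (hgt : ∀ A, A ≠ 0 → 1 < Nrm A)
    (hmul : ∀ A B, Nrm (A + B) = Nrm A * Nrm B)
    (c α : ℝ) (hc : 0 < c) (hα0 : 0 ≤ α) (hα1 : α < 1)
    (hfin : ∀ x : ℝ, {A : X →₀ ℕ | (Nrm A : ℝ) ≤ x}.Finite)
    (hcount : (fun x : ℝ => (((hfin x).toFinset.card : ℝ) - c * x))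
      =O[atTop] fun x : ℝ => x ^ α)
    (K : X →₀ ℕ) (hK : K ≠ 0) :
    (fun x : ℝ => ((∑ M ∈ (hfin x).toFinset, ram Nrm K M : ℤ) : ℝ))
      =O[atTop] fun x : ℝ => x ^ α := by
  have hkey : (fun x : ℝ => ((∑ M ∈ (hfin x).toFinset, ram Nrm K M : ℤ) : ℝ))
      = fun x : ℝ => ∑ D ∈ Finset.Iic K, ((Nrm D : ℝ) * (mob (K - D) : ℝ))
          * (((hfin (x / (Nrm D : ℝ))).toFinset.card : ℝ) - c * (x / (Nrm D : ℝ))) := by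
    funext x
    have h1 := sum_ram_eq Nrm hge hmul hfin K x
    have hDpos : ∀ D : X →₀ ℕ, (0 : ℝ) < (Nrm D : ℝ) := fun D => by
      exact_mod_cast lt_of_lt_of_le zero_lt_one (hge D)
    have h2 : ((∑ M ∈ (hfin x).toFinset, ram Nrm K M : ℤ) : ℝ)
        = ∑ D ∈ Finset.Iic K, ((Nrm D : ℝ) * (mob (K - D) : ℝ))
            * ((hfin (x / (Nrm D : ℝ))).toFinset.card : ℝ) := by
      rw [h1]; push_cast; ring_nf
    rw [h2]
    have h3 : ∑ D ∈ Finset.Iic K, ((Nrm D : ℝ) * (mob (K - D) : ℝ))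
        * (c * (x / (Nrm D : ℝ))) = 0 := by
      have : ∀ D ∈ Finset.Iic K, ((Nrm D : ℝ) * (mob (K - D) : ℝ))
          * (c * (x / (Nrm D : ℝ))) = (c * x) * (mob (K - D) : ℝ) := by
        intro D _
        field_simp [(hDpos D).ne']
      rw [Finset.sum_congr rfl this, ← Finset.mul_sum]
      have : ∑ D ∈ Finset.Iic K, ((mob (K - D) : ℤ) : ℝ)
          = ((∑ D ∈ Finset.Iic K, mob (K - D) : ℤ) : ℝ) := by push_cast; rfl
      rw [this, mob_rev_sum_zero K hK]
      simp
    rw [Finset.sum_congr rfl (fun D _ => by ring :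
      ∀ D ∈ Finset.Iic K, ((Nrm D : ℝ) * (mob (K - D) : ℝ))
          * (((hfin (x / (Nrm D : ℝ))).toFinset.card : ℝ) - c * (x / (Nrm D : ℝ)))
        = ((Nrm D : ℝ) * (mob (K - D) : ℝ)) * ((hfin (x / (Nrm D : ℝ))).toFinset.card : ℝ)
          - ((Nrm D : ℝ) * (mob (K - D) : ℝ)) * (c * (x / (Nrm D : ℝ))))]
    rw [Finset.sum_sub_distrib, h3, sub_zero]
  rw [hkey]
  refine Asymptotics.IsBigO.fun_sum ?_
  intro D _
  have hDpos : (0 : ℝ) < (Nrm D : ℝ) := by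
    exact_mod_cast lt_of_lt_of_le zero_lt_one (hge D)
  have hD1 : (1 : ℝ) ≤ (Nrm D : ℝ) := by exact_mod_cast hge D
  refine Asymptotics.IsBigO.const_mul_left ?_ _
  have htend : Tendsto (fun x : ℝ => x / (Nrm D : ℝ)) atTop atTop :=
    Filter.tendsto_id.atTop_div_const hDpos
  have hcomp := hcount.comp_tendsto htend
  refine hcomp.trans ?_
  refine Asymptotics.IsBigO.of_bound 1 ?_
  filter_upwards [eventually_ge_atTop (0 : ℝ)] with x hx
  have hdiv : (0 : ℝ) ≤ x / (Nrm D : ℝ) := div_nonneg hx hDpos.le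
  simp only [Function.comp_apply, one_mul, Real.norm_eq_abs]
  rw [abs_of_nonneg (Real.rpow_nonneg hdiv _), abs_of_nonneg (Real.rpow_nonneg hx _)]
  exact Real.rpow_le_rpow hdiv (div_le_self hx hD1) hα0
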